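/- arXiv:2212.05368 — 2 statements merged into one kernel-verified Lean document; each statement's English description precedes it below -/
import Mathlib

section
/- For p a 2π-periodic even continuous function (p(−x) = p(x) for all x), the function x ↦ (1/2π)∫₀^{2π} (p(x)p(y) sin(x−y) + (p(x)p'(y) − p'(x)p(y))cos(x−y)) / |(p(x)−p(y))² + 4p(x)p(y)sin²((x−y)/2)|^{α/2} dy is odd in x, provided p is C¹, strictly positive, and the integral converges absolutely. -/
open Real

/-- The self-interaction part of the contour dynamics functional maps even profiles to
odd functions: for `p` C¹, `2π`-periodic, even and strictly positive with absolutely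
convergent integrand, the mean-value integral is odd in `x`. -/
theorem contour_functional_odd
    (α : ℝ) (hα1 : 1 ≤ α) (hα2 : α < 2)
    (p : ℝ → ℝ) (hp : ContDiff ℝ 1 p) (hper : Function.Periodic p (2 * π))
    (heven : ∀ x, p (-x) = p x) (hpos : ∀ x, 0 < p x)
    (hint : ∀ x : ℝ, IntervalIntegrable
      (fun y =>
        (p x * p y * Real.sin (x - y)
          + (p x * deriv p y - deriv p x * p y) * Real.cos (x - y))
        / |(p x - p y) ^ 2 + 4 * p x * p y * Real.sin ((x - y) / 2) ^ 2| ^ (α / 2))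
      MeasureTheory.volume 0 (2 * π)) :
    ∀ x : ℝ,
      (1 / (2 * π)) * ∫ y in (0:ℝ)..(2 * π),
          (p (-x) * p y * Real.sin (-x - y)
            + (p (-x) * deriv p y - deriv p (-x) * p y) * Real.cos (-x - y))
          / |(p (-x) - p y) ^ 2 + 4 * p (-x) * p y * Real.sin ((-x - y) / 2) ^ 2| ^ (α / 2)
      = -((1 / (2 * π)) * ∫ y in (0:ℝ)..(2 * π),
          (p x * p y * Real.sin (x - y)
            + (p x * deriv p y - deriv p x * p y) * Real.cos (x - y))
          / |(p x - p y) ^ 2 + 4 * p x * p y * Real.sin ((x - y) / 2) ^ 2| ^ (α / 2)) := by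
  -- deriv p is odd
  have hodd : ∀ x : ℝ, deriv p (-x) = -deriv p x := by
    intro x
    have h1 : (fun x => p (-x)) = p := funext heven
    have := deriv_comp_neg p x
    rw [h1] at this
    linarith [this]
  -- deriv p is periodic
  have hderper : Function.Periodic (deriv p) (2 * π) := by
    intro x
    have h1 : (fun x => p (x + 2 * π)) = p := funext hper
    have := deriv_comp_add_const p (2 * π) x
    rw [h1] at this
    exact this.symm
  intro x
  set g : ℝ → ℝ → ℝ := fun x y =>
      (p x * p y * Real.sin (x - y)
        + (p x * deriv p y - deriv p x * p y) * Real.cos (x - y))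
      / |(p x - p y) ^ 2 + 4 * p x * p y * Real.sin ((x - y) / 2) ^ 2| ^ (α / 2) with hg
  -- pointwise antisymmetry: g (-x) y = - g x (-y)
  have key : ∀ y : ℝ, g (-x) y = -(g x (-y)) := by
    intro y
    simp only [hg]
    rw [heven, heven, hodd, hodd]
    have hs1 : Real.sin (-x - y) = -Real.sin (x - -y) := by
      rw [show (-x - y : ℝ) = -(x - -y) by ring, Real.sin_neg]
    have hc1 : Real.cos (-x - y) = Real.cos (x - -y) := by
      rw [show (-x - y : ℝ) = -(x - -y) by ring, Real.cos_neg]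
    have hs2 : Real.sin ((-x - y) / 2) ^ 2 = Real.sin ((x - -y) / 2) ^ 2 := by
      rw [show ((-x - y) / 2 : ℝ) = -((x - -y) / 2) by ring, Real.sin_neg]
      ring
    rw [hs1, hc1, hs2, ← neg_div]
    congr 1
    ring
  -- periodicity of g x in y
  have hgper : Function.Periodic (g x) (2 * π) := by
    intro y
    simp only [hg]
    rw [hper, hderper]
    have hs1 : Real.sin (x - (y + 2 * π)) = Real.sin (x - y) := by
      rw [show (x - (y + 2 * π) : ℝ) = (x - y) - 2 * π by ring, Real.sin_sub_two_pi]
    have hc1 : Real.cos (x - (y + 2 * π)) = Real.cos (x - y) := by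
      rw [show (x - (y + 2 * π) : ℝ) = (x - y) - 2 * π by ring, Real.cos_sub_two_pi]
    have hs2 : Real.sin ((x - (y + 2 * π)) / 2) ^ 2 = Real.sin ((x - y) / 2) ^ 2 := by
      rw [show ((x - (y + 2 * π)) / 2 : ℝ) = (x - y) / 2 - π by ring, Real.sin_sub_pi]
      ring
    rw [hs1, hc1, hs2]
  have step1 : (∫ y in (0:ℝ)..(2 * π), g (-x) y) = -∫ y in (0:ℝ)..(2 * π), g x (-y) := by
    rw [← intervalIntegral.integral_neg]
    exact intervalIntegral.integral_congr fun y _ => key y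
  have step2 : (∫ y in (0:ℝ)..(2 * π), g x (-y)) = ∫ y in (-(2 * π):ℝ)..(0:ℝ), g x y := by
    simpa using intervalIntegral.integral_comp_neg (a := (0:ℝ)) (b := 2 * π) (g x)
  have step3 : (∫ y in (-(2 * π):ℝ)..(0:ℝ), g x y) = ∫ y in (0:ℝ)..(2 * π), g x y := by
    have := hgper.intervalIntegral_add_eq (-(2 * π)) 0
    simpa using this
  calc (1 / (2 * π)) * ∫ y in (0:ℝ)..(2 * π), g (-x) y
      = (1 / (2 * π)) * -∫ y in (0:ℝ)..(2 * π), g x y := by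
        rw [step1, step2, step3]
    _ = -((1 / (2 * π)) * ∫ y in (0:ℝ)..(2 * π), g x y) := by ring
end

section
/- For |x−y| small and g bounded, D_α(g)(x,y) := b^{2+2α}ε^{2+2α}(g(x)−g(y))² + 4(1+ε|ε|^α b^{1+α}g(x))(1+ε|ε|^α b^{1+α}g(y))sin²((x−y)/2) satisfies c₁·sin²((x−y)/2) ≤ D_α(g)(x,y) ≤ c₂·(x−y)² for positive constants c₁, c₂, provided g is Lipschitz with constant L, |ε| < 1/2, b > 0, and ε|ε|^α b^{1+α}‖g‖_∞ ≤ 1/2. -/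
open Real

set_option maxHeartbeats 1000000 in
/-- Two-sided comparability `D_α(g)(x,y) ∼ sin²((x−y)/2) ∼ |x−y|²` for `|x−y|` small:
the denominator of the contour dynamics integrand is coercive. -/
theorem denominator_comparability
    (α b ε L M : ℝ) (hα1 : 1 ≤ α) (hα2 : α < 2) (hb : 0 < b) (hε : |ε| < 1/2)
    (g : ℝ → ℝ) (hLip : ∀ x y, |g x - g y| ≤ L * |x - y|)
    (hM : ∀ x, |g x| ≤ M) (hsmall : |ε| ^ (1 + α) * b ^ (1 + α) * M ≤ 1/2) :
    ∃ c₁ > 0, ∃ c₂ > 0, ∃ δ > 0, ∀ x y : ℝ, |x - y| ≤ δ →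
      c₁ * Real.sin ((x - y) / 2) ^ 2
        ≤ |ε| ^ (2 + 2 * α) * b ^ (2 + 2 * α) * (g x - g y) ^ 2
            + 4 * (1 + ε * |ε| ^ α * b ^ (1 + α) * g x)
                * (1 + ε * |ε| ^ α * b ^ (1 + α) * g y)
                * Real.sin ((x - y) / 2) ^ 2
      ∧ |ε| ^ (2 + 2 * α) * b ^ (2 + 2 * α) * (g x - g y) ^ 2
            + 4 * (1 + ε * |ε| ^ α * b ^ (1 + α) * g x)
                * (1 + ε * |ε| ^ α * b ^ (1 + α) * g y)
                * Real.sin ((x - y) / 2) ^ 2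
          ≤ c₂ * (x - y) ^ 2 := by
  have hεα : |ε| ^ (1 + α) = |ε| * |ε| ^ α := by
    rw [Real.rpow_add' (abs_nonneg ε) (by positivity), Real.rpow_one]
  have hε2 : |ε| ^ (2 + 2 * α) = (|ε| ^ (1 + α)) ^ 2 := by
    rw [show (2 : ℝ) + 2 * α = (1 + α) + (1 + α) by ring,
      Real.rpow_add' (abs_nonneg ε) (by positivity), sq]
  have hb2 : b ^ (2 + 2 * α) = (b ^ (1 + α)) ^ 2 := by
    rw [show (2 : ℝ) + 2 * α = (1 + α) + (1 + α) by ring, Real.rpow_add hb, sq]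
  have hbpos : (0:ℝ) < b ^ (1 + α) := Real.rpow_pos_of_pos hb _
  have hεnn : (0:ℝ) ≤ |ε| ^ (1 + α) := Real.rpow_nonneg (abs_nonneg ε) _
  -- bound on perturbation factor
  have hfac : ∀ x, 1/2 ≤ 1 + ε * |ε| ^ α * b ^ (1 + α) * g x ∧
      1 + ε * |ε| ^ α * b ^ (1 + α) * g x ≤ 3/2 := by
    intro x
    have h1 : |ε * |ε| ^ α * b ^ (1 + α) * g x| ≤ 1/2 := by
      have : |ε * |ε| ^ α * b ^ (1 + α) * g x|
          = |ε| ^ (1 + α) * b ^ (1 + α) * |g x| := by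
        rw [abs_mul, abs_mul, abs_mul, abs_of_nonneg (Real.rpow_nonneg (abs_nonneg ε) α),
          abs_of_pos hbpos, hεα]
      rw [this]
      calc |ε| ^ (1 + α) * b ^ (1 + α) * |g x|
          ≤ |ε| ^ (1 + α) * b ^ (1 + α) * M := by
            apply mul_le_mul_of_nonneg_left (hM x) (by positivity)
        _ ≤ 1/2 := hsmall
      
    have := abs_le.1 h1
    constructor <;> linarith [this.1, this.2]
  have hL : 0 ≤ L := by
    have := hLip 0 1
    have h2 : (0:ℝ) ≤ L * |(0:ℝ) - 1| := le_trans (abs_nonneg _) this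
    simpa using h2
  refine ⟨1, one_pos, |ε| ^ (2 + 2 * α) * b ^ (2 + 2 * α) * L ^ 2 + 9/4,
    by positivity, 1, one_pos, fun x y hxy => ?_⟩
  set E := |ε| ^ (2 + 2 * α) * b ^ (2 + 2 * α) with hE
  set A := 1 + ε * |ε| ^ α * b ^ (1 + α) * g x with hA
  set B := 1 + ε * |ε| ^ α * b ^ (1 + α) * g y with hB
  set s := Real.sin ((x - y) / 2) with hs
  obtain ⟨hx1, hx2⟩ := hfac x
  rw [← hA] at hx1 hx2
  obtain ⟨hy1, hy2⟩ := hfac y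
  rw [← hB] at hy1 hy2
  have hs2 : s ^ 2 ≤ ((x - y) / 2) ^ 2 := Real.sin_sq_le_sq
  have hsnn : (0:ℝ) ≤ s ^ 2 := sq_nonneg _
  have hεb2 : (0:ℝ) ≤ E := by rw [hE]; positivity
  constructor
  · have h4 : (1:ℝ) * s ^ 2 ≤ 4 * A * B * s ^ 2 := by
      apply mul_le_mul_of_nonneg_right _ hsnn
      nlinarith
    nlinarith [mul_nonneg hεb2 (sq_nonneg (g x - g y))]
  · have hg2 : (g x - g y) ^ 2 ≤ L ^ 2 * (x - y) ^ 2 := by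
      have := hLip x y
      nlinarith [abs_nonneg (g x - g y), abs_nonneg (x - y), sq_abs (g x - g y),
        sq_abs (x - y)]
    have hAB : 4 * A * B ≤ 9 := by nlinarith
    have hprod : 4 * A * B * s ^ 2 ≤ 9 * ((x - y) / 2) ^ 2 := by
      calc 4 * A * B * s ^ 2 ≤ 9 * s ^ 2 :=
            mul_le_mul_of_nonneg_right hAB hsnn
        _ ≤ 9 * ((x - y) / 2) ^ 2 := by linarith
    have hfirst : E * (g x - g y) ^ 2 ≤ E * (L ^ 2 * (x - y) ^ 2) :=
      mul_le_mul_of_nonneg_left hg2 hεb2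
    have h9 : 9 * ((x - y) / 2) ^ 2 = 9/4 * (x - y) ^ 2 := by ring
    have hEL : E * (L ^ 2 * (x - y) ^ 2) = E * L ^ 2 * (x - y) ^ 2 := by ring
    nlinarith [hfirst, hprod]
end
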